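/- The supremum over all real s of the kernels LinearMap.ker( cosh(s·b) • (1 : E →ₗ[ℝ] E) − (sinh(s·b)/b) • A ) equals the whole space E (i.e. this supremum of submodules is ⊤) if and only if every real eigenvalue λ of A satisfies |λ| > b. -/

import Mathlib

open RealInnerProductSpace


/-- The inverse hyperbolic tangent on `(-1, 1)` (not present in Mathlib),
`artanh x = (1/2) · log((1+x)/(1-x))`. -/
noncomputable def Real.artanh' (x : ℝ) : ℝ := (1 / 2) * Real.log ((1 + x) / (1 - x))

private lemma abs_sinh_lt_cosh (t : ℝ) : |Real.sinh t| < Real.cosh t := by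
  rw [abs_lt]
  constructor
  · nlinarith [Real.exp_pos t, Real.cosh_add_sinh t]
  · nlinarith [Real.exp_pos (-t), Real.cosh_sub_sinh t]

private lemma key (b μ : ℝ) (hb : 0 < b) (hμ : b < |μ|) :
    Real.sinh ((1/2) * Real.log ((μ+b)/(μ-b))) * μ
      = b * Real.cosh ((1/2) * Real.log ((μ+b)/(μ-b))) := by
  have hμb : μ - b ≠ 0 := by
    rcases lt_abs.mp hμ with h | h
    · exact sub_ne_zero.mpr (ne_of_gt h)
    · have : μ < -b := by linarith
      intro hc; nlinarith
  have hr : 0 < (μ+b)/(μ-b) := by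
    rcases lt_abs.mp hμ with h | h
    · apply div_pos <;> linarith
    · have h1 : μ + b < 0 := by linarith
      have h2 : μ - b < 0 := by linarith
      exact div_pos_of_neg_of_neg h1 h2
  set t := (1/2) * Real.log ((μ+b)/(μ-b)) with ht
  have hu : Real.exp t * Real.exp t = (μ+b)/(μ-b) := by
    rw [← Real.exp_add]
    have : t + t = Real.log ((μ+b)/(μ-b)) := by rw [ht]; ring
    rw [this, Real.exp_log hr]
  have hu2 : Real.exp t * Real.exp t * (μ - b) = μ + b := by
    rw [hu]; field_simp
  have hupos := Real.exp_pos t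
  rw [Real.sinh_eq, Real.cosh_eq, Real.exp_neg]
  field_simp
  nlinarith [hu2]

/-- Let `E` be a finite-dimensional real inner product space, `A` a self-adjoint
endomorphism of `E` and `b > 0`.  The supremum over all real `s` of the kernels
`ker(cosh(s·b) • id − (sinh(s·b)/b) • A)` equals the whole space `E` if and only if every real
eigenvalue `λ` of `A` satisfies `|λ| > b`. -/
theorem iSup_ker_cosh_smul_sub_sinh_smul_eq_top_iff
    {E : Type*} [NormedAddCommGroup E] [InnerProductSpace ℝ E] [FiniteDimensional ℝ E]
    (A : E →ₗ[ℝ] E) (hA : A.IsSymmetric) (b : ℝ) (hb : 0 < b) :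
    (⨆ s : ℝ,
        LinearMap.ker (Real.cosh (s * b) • (1 : E →ₗ[ℝ] E) - (Real.sinh (s * b) / b) • A)) = ⊤ ↔
      ∀ l : ℝ, Module.End.HasEigenvalue A l → b < |l| := by
  constructor
  · intro h l hl
    by_contra hle
    push_neg at hle
    obtain ⟨x, hxe⟩ := hl.exists_hasEigenvector
    have hx0 : x ≠ 0 := hxe.right
    have hAx : A x = l • x := hxe.apply_eq_smul
    have hker : ∀ s : ℝ,
        LinearMap.ker (Real.cosh (s * b) • (1 : E →ₗ[ℝ] E) - (Real.sinh (s * b) / b) • A)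
          ≤ (ℝ ∙ x)ᗮ := by
      intro s y hy
      rw [Submodule.mem_orthogonal_singleton_iff_inner_right]
      set t := s * b with htdef
      have hy' : Real.cosh t • y - (Real.sinh t / b) • A y = 0 := by
        simpa [LinearMap.sub_apply, LinearMap.smul_apply] using
          (LinearMap.mem_ker.mp hy)
      have hinner : Real.cosh t * ⟪x, y⟫ - (Real.sinh t / b) * (l * ⟪x, y⟫) = 0 := by
        have h1 : ⟪x, Real.cosh t • y - (Real.sinh t / b) • A y⟫ = 0 := by
          rw [hy']; exact inner_zero_right x
        rw [inner_sub_right, real_inner_smul_right, real_inner_smul_right] at h1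
        rw [← hA x y, hAx, real_inner_smul_left] at h1
        linarith
      have hcoef : Real.cosh t - Real.sinh t / b * l ≠ 0 := by
        have h2 : |Real.sinh t / b * l| ≤ |Real.sinh t| := by
          rw [abs_mul, abs_div, abs_of_pos hb]
          calc |Real.sinh t| / b * |l| ≤ |Real.sinh t| / b * b := by
                apply mul_le_mul_of_nonneg_left hle; positivity
            _ = |Real.sinh t| := by field_simp
        have h3 := abs_sinh_lt_cosh t
        have := (abs_le.mp h2).2
        have := (abs_le.mp h2).1
        have := (abs_lt.mp h3).1
        have := (abs_lt.mp h3).2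
        intro hc; linarith [neg_abs_le (Real.sinh t / b * l)]
      have : ⟪x, y⟫ * (Real.cosh t - Real.sinh t / b * l) = 0 := by linear_combination hinner
      rcases mul_eq_zero.mp this with h' | h'
      · exact h'
      · exact absurd h' hcoef
    have htop : (⊤ : Submodule ℝ E) ≤ (ℝ ∙ x)ᗮ := h ▸ iSup_le hker
    have hx : x ∈ (ℝ ∙ x)ᗮ := htop Submodule.mem_top
    rw [Submodule.mem_orthogonal_singleton_iff_inner_right] at hx
    exact hx0 (inner_self_eq_zero.mp hx)
  · intro h
    rw [eq_top_iff]
    have hspec : (⨆ μ : ℝ, Module.End.eigenspace A μ) = ⊤ :=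
      Submodule.orthogonal_eq_bot_iff.mp hA.orthogonalComplement_iSup_eigenspaces_eq_bot
    rw [← hspec]
    apply iSup_le
    intro μ
    by_cases hμ0 : Module.End.eigenspace A μ = ⊥
    · rw [hμ0]; exact bot_le
    have hμ : b < |μ| := h μ hμ0
    have hμb : μ - b ≠ 0 := by
      rcases lt_abs.mp hμ with h' | h'
      · exact sub_ne_zero.mpr (ne_of_gt h')
      · intro hc; nlinarith
    set s : ℝ := ((1/2) * Real.log ((μ+b)/(μ-b))) / b with hs
    have hsb : s * b = (1/2) * Real.log ((μ+b)/(μ-b)) :=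
      div_mul_cancel₀ _ hb.ne'
    refine le_trans ?_ (le_iSup _ s)
    intro x hx
    rw [Module.End.mem_eigenspace_iff] at hx
    rw [LinearMap.mem_ker, LinearMap.sub_apply, LinearMap.smul_apply, LinearMap.smul_apply,
      Module.End.one_apply, hx, hsb]
    have hkey := key b μ hb hμ
    set T := (1/2 : ℝ) * Real.log ((μ+b)/(μ-b)) with hT
    rw [smul_smul, sub_eq_zero]
    congr 1
    rw [div_mul_eq_mul_div, hkey, mul_div_cancel_left₀ _ hb.ne']
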